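/- The sum of an indecomposable affine mesh ((A_i)_{i∈I}; φ_{i,j}; c_{i,j}) is a medial quandle whose orbits (the orbits of the action of its multiplication group) are exactly the fibres A_i, i ∈ I. -/

import Mathlib

/-- The set of left translations of a binary algebra `(Q, op)`, viewed as permutations:
permutations `f` such that `f x = op a x` for some `a`. -/
def translations {Q : Type*} (op : Q → Q → Q) : Set (Equiv.Perm Q) :=
  { f | ∃ a : Q, ∀ x : Q, f x = op a x }

/-- The (left) multiplication group `LMlt(Q)`: the subgroup of the symmetric group
generated by the left translations. -/
def LMlt {Q : Type*} (op : Q → Q → Q) : Subgroup (Equiv.Perm Q) :=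
  Subgroup.closure (translations op)

/-- The displacement group `Dis(Q)`: the subgroup generated by all `L_a * L_b⁻¹`. -/
def Dis {Q : Type*} (op : Q → Q → Q) : Subgroup (Equiv.Perm Q) :=
  Subgroup.closure { f | ∃ g ∈ translations op, ∃ h ∈ translations op, f = g * h⁻¹ }

/-- `(Q, op)` is a quandle: idempotent, left distributive, left quasigroup. -/
def IsQuandle {Q : Type*} (op : Q → Q → Q) : Prop :=
  (∀ x, op x x = x) ∧
  (∀ x y z, op x (op y z) = op (op x y) (op x z)) ∧
  (∀ x y, ∃! u, op x u = y)

/-- `(Q, op)` is medial. -/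
def IsMedial {Q : Type*} (op : Q → Q → Q) : Prop :=
  ∀ x y u v, op (op x y) (op u v) = op (op x u) (op y v)

/-- The orbit of `e` under the multiplication group. -/
def qOrbit {Q : Type*} (op : Q → Q → Q) (e : Q) : Set Q :=
  { y | ∃ f ∈ LMlt op, f e = y }

/-- The orbit of `e` under the displacement group. -/
def disOrbit {Q : Type*} (op : Q → Q → Q) (e : Q) : Set Q :=
  { y | ∃ f ∈ Dis op, f e = y }

/-- An affine mesh over an index set `I`: abelian groups `A i`, homomorphisms
`φ i j : A i →+ A j`, and constants `c i j ∈ A j`, satisfying (M1)–(M4). -/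
structure AffineMesh (I : Type*) (A : I → Type*) [∀ i, AddCommGroup (A i)] where
  φ : ∀ i j : I, A i →+ A j
  c : ∀ i j : I, A j
  m1 : ∀ i : I, Function.Bijective fun x : A i => x - φ i i x
  m2 : ∀ i : I, c i i = 0
  m3 : ∀ i j j' k : I, (φ j k).comp (φ i j) = (φ j' k).comp (φ i j')
  m4 : ∀ i j k : I, φ j k (c i j) = φ k k (c i k - c j k)

/-- The sum of an affine mesh: the binary operation on the disjoint union of the fibres,
`a * b = c i j + φ i j a + (1 - φ j j) b` for `a ∈ A i`, `b ∈ A j`. -/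
def AffineMesh.sum {I : Type*} {A : I → Type*} [∀ i, AddCommGroup (A i)]
    (M : AffineMesh I A) (x y : Σ i, A i) : Σ i, A i :=
  ⟨y.1, M.c x.1 y.1 + M.φ x.1 y.1 x.2 + (y.2 - M.φ y.1 y.1 y.2)⟩

/-- An affine mesh is indecomposable if every fibre `A j` is generated by the
sets `c i j + Im (φ i j)`, `i ∈ I`. -/
def AffineMesh.Indecomposable {I : Type*} {A : I → Type*} [∀ i, AddCommGroup (A i)]
    (M : AffineMesh I A) : Prop :=
  ∀ j : I, AddSubgroup.closure (⋃ i : I, Set.range fun a : A i => M.c i j + M.φ i j a) = ⊤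


namespace AffineMesh

variable {I : Type*} {A : I → Type*} [∀ i, AddCommGroup (A i)] (M : AffineMesh I A)

/-- The bijection `x ↦ x - φ j j x` as an equiv. -/
noncomputable def sEquiv (j : I) : A j ≃ A j := Equiv.ofBijective _ (M.m1 j)

lemma sEquiv_apply (j : I) (x : A j) : M.sEquiv j x = x - M.φ j j x := rfl

/-- Left translation as a permutation. -/
noncomputable def Lperm (a : Σ i, A i) : Equiv.Perm (Σ i, A i) where
  toFun z := M.sum a z
  invFun z := ⟨z.1, (M.sEquiv z.1).symm (z.2 - M.c a.1 z.1 - M.φ a.1 z.1 a.2)⟩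
  left_inv z := by
    have h : M.c a.1 z.1 + M.φ a.1 z.1 a.2 + (z.2 - M.φ z.1 z.1 z.2)
        - M.c a.1 z.1 - M.φ a.1 z.1 a.2 = M.sEquiv z.1 z.2 := by
      rw [sEquiv_apply]; abel
    have h2 : (M.sEquiv z.1).symm (M.c a.1 z.1 + M.φ a.1 z.1 a.2 + (z.2 - M.φ z.1 z.1 z.2)
        - M.c a.1 z.1 - M.φ a.1 z.1 a.2) = z.2 := by rw [h, Equiv.symm_apply_apply]
    exact congrArg (Sigma.mk z.1) h2
  right_inv z := by
    have h : M.c a.1 z.1 + M.φ a.1 z.1 a.2 +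
        M.sEquiv z.1 ((M.sEquiv z.1).symm (z.2 - M.c a.1 z.1 - M.φ a.1 z.1 a.2)) = z.2 := by
      rw [Equiv.apply_symm_apply]; abel
    exact congrArg (Sigma.mk z.1) h

lemma Lperm_apply (a z : Σ i, A i) : M.Lperm a z = M.sum a z := rfl

lemma Lperm_mem (a : Σ i, A i) : M.Lperm a ∈ LMlt M.sum :=
  Subgroup.subset_closure ⟨a, fun _ => rfl⟩

lemma fst_eq_of_mem {f : Equiv.Perm (Σ i, A i)} (hf : f ∈ LMlt M.sum) :
    ∀ z, (f z).1 = z.1 := by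
  refine Subgroup.closure_induction (p := fun f _ => ∀ z, (f z).1 = z.1) ?_ ?_ ?_ ?_ hf
  · rintro g ⟨a, ha⟩ z
    rw [ha z]; rfl
  · intro z; rfl
  · intro g h _ _ hg hh z
    have : (g * h) z = g (h z) := rfl
    rw [this, hg, hh]
  · intro g _ hg z
    have := hg (g⁻¹ z)
    rw [Equiv.Perm.coe_inv, Equiv.apply_symm_apply] at this
    exact this.symm

/-- Translations of the fibre `A j` realized by elements of `LMlt`. -/
def G (j : I) : AddSubgroup (A j) where
  carrier := {t | ∃ f ∈ LMlt M.sum, ∀ b : A j, f ⟨j, b⟩ = ⟨j, b + t⟩}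
  zero_mem' := ⟨1, one_mem _, fun b => by rw [add_zero]; rfl⟩
  add_mem' := by
    rintro t s ⟨f, hf, hft⟩ ⟨g, hg, hgt⟩
    refine ⟨f * g, mul_mem hf hg, fun b => ?_⟩
    have : (f * g) (⟨j, b⟩ : Σ i, A i) = f (g ⟨j, b⟩) := rfl
    rw [this, hgt, hft, add_assoc, add_comm s t]
  neg_mem' := by
    rintro t ⟨f, hf, hft⟩
    refine ⟨f⁻¹, inv_mem hf, fun b => ?_⟩
    apply f.injective
    rw [Equiv.Perm.coe_inv, Equiv.apply_symm_apply, hft, add_assoc, neg_add_cancel, add_zero]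

lemma G_eq_top (hind : M.Indecomposable) (j : I) : M.G j = ⊤ := by
  rw [← hind j]
  refine le_antisymm ?_ (AddSubgroup.closure_le _ |>.mpr ?_)
  · rw [hind j]; exact le_top
  · rintro t ht
    simp only [Set.mem_iUnion, Set.mem_range] at ht
    obtain ⟨i, a, rfl⟩ := ht
    refine ⟨M.Lperm ⟨i, a⟩ * (M.Lperm ⟨j, 0⟩)⁻¹,
      mul_mem (M.Lperm_mem _) (inv_mem (M.Lperm_mem _)), fun b => ?_⟩
    have h1 : (M.Lperm ⟨j, 0⟩)⁻¹ (⟨j, b⟩ : Σ i, A i)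
        = ⟨j, (M.sEquiv j).symm (b - M.c j j - M.φ j j 0)⟩ := rfl
    have hc : b - M.c j j - M.φ j j 0 = b := by rw [M.m2, map_zero]; abel
    have h2 : (M.Lperm ⟨i, a⟩ * (M.Lperm ⟨j, 0⟩)⁻¹) (⟨j, b⟩ : Σ i, A i)
        = M.Lperm ⟨i, a⟩ ⟨j, (M.sEquiv j).symm b⟩ := by
      rw [show (M.Lperm ⟨i, a⟩ * (M.Lperm ⟨j, 0⟩)⁻¹) (⟨j, b⟩ : Σ i, A i)
        = M.Lperm ⟨i, a⟩ ((M.Lperm ⟨j, 0⟩)⁻¹ ⟨j, b⟩) from rfl, h1, hc]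
    rw [h2]
    have h3 : M.c i j + M.φ i j a +
        M.sEquiv j ((M.sEquiv j).symm b) = b + (M.c i j + M.φ i j a) := by
      rw [Equiv.apply_symm_apply]; abel
    exact congrArg (Sigma.mk j) h3

end AffineMesh

/-- Lemma 3.8: the sum of an indecomposable affine mesh is a medial quandle whose
orbits are exactly the fibres `A i`. -/
theorem mesh_sum_orbits_are_fibres {I : Type*} [Nonempty I] {A : I → Type*}
    [∀ i, AddCommGroup (A i)] (M : AffineMesh I A) (hind : M.Indecomposable) :
    IsQuandle M.sum ∧ IsMedial M.sum ∧
      ∀ x : Σ i, A i, qOrbit M.sum x = { y : Σ i, A i | y.1 = x.1 } := by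
  refine ⟨⟨?_, ?_, ?_⟩, ?_, ?_⟩
  · -- idempotent
    intro x
    have h : M.c x.1 x.1 + M.φ x.1 x.1 x.2 + (x.2 - M.φ x.1 x.1 x.2) = x.2 := by
      rw [M.m2]; abel
    exact congrArg (Sigma.mk x.1) h
  · -- left distributive
    rintro ⟨i, a⟩ ⟨j, b⟩ ⟨k, d⟩
    have h1 := DFunLike.congr_fun (M.m3 i j k k) a
    have h2 := DFunLike.congr_fun (M.m3 j j k k) b
    simp only [AddMonoidHom.coe_comp, Function.comp_apply] at h1 h2
    have h4 := M.m4 i j k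
    dsimp only [AffineMesh.sum]
    apply congrArg (Sigma.mk k)
    simp only [AffineMesh.sum, map_add, map_sub, h1, h2, h4]
    abel
  · -- left quasigroup
    intro x y
    exact ⟨(M.Lperm x).symm y, (M.Lperm x).apply_symm_apply y,
      fun u hu => (M.Lperm x).injective
        (hu.trans ((M.Lperm x).apply_symm_apply y).symm)⟩
  · -- medial
    rintro ⟨i, a⟩ ⟨j, b⟩ ⟨k, d⟩ ⟨l, e⟩
    have h1 := DFunLike.congr_fun (M.m3 i j k l) a
    have h2 := DFunLike.congr_fun (M.m3 j j l l) b
    have h3 := DFunLike.congr_fun (M.m3 k k l l) d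
    simp only [AddMonoidHom.coe_comp, Function.comp_apply] at h1 h2 h3
    have h4 := M.m4 i j l
    have h5 := M.m4 i k l
    dsimp only [AffineMesh.sum]
    apply congrArg (Sigma.mk l)
    simp only [AffineMesh.sum, map_add, map_sub, h1, h2, h3, h4, h5]
    abel
  · -- orbits are fibres
    intro x
    ext y
    constructor
    · rintro ⟨f, hf, rfl⟩
      exact M.fst_eq_of_mem hf x
    · rintro hy
      obtain ⟨j, b0⟩ := x
      obtain ⟨j', b⟩ := y
      simp only [Set.mem_setOf_eq] at hy
      subst hy
      have ht : b - b0 ∈ M.G j' := by rw [M.G_eq_top hind]; trivial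
      obtain ⟨f, hf, hft⟩ := ht
      exact ⟨f, hf, by rw [hft, add_sub_cancel]⟩
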